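/- The counting measure on $\mathbb{N}$ (vertices $\{1,2,3,\dots\}$ with distance $|m-n|$) has doubling constant $3$, and $C_{\mathbb{N}} = C^0_{\mathbb{N}} = 3$: the infimum over all positive weight functions $\mu$ of $\sup_{j,k} \mu(B(j,2k+1))/\mu(B(j,k))$ is $3$, and likewise for the radius-1 version. -/

import Mathlib

open Finset

/-- The closed ball of center `j` and radius `k` in `ℕ = {1,2,…}` (infinite path graph). -/
def nball (j k : ℕ) : Finset ℕ := Finset.Icc (max 1 (j - k)) (j + k)

/-- The set of doubling quotients of a weight `μ` on `ℕ = {1,2,…}`. -/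
def ratioSet (μ : ℕ → ℝ) : Set ℝ :=
  {x | ∃ j : ℕ, 1 ≤ j ∧ ∃ k : ℕ,
    x = (∑ i ∈ nball j (2 * k + 1), μ i) / (∑ i ∈ nball j k, μ i)}

/-- The set of radius-one doubling quotients of a weight `μ` on `ℕ = {1,2,…}`. -/
def ratio0Set (μ : ℕ → ℝ) : Set ℝ :=
  {x | ∃ j : ℕ, 1 ≤ j ∧ x = (∑ i ∈ nball j 1, μ i) / μ j}

lemma nball_card (j k : ℕ) : (nball j k).card = j + k + 1 - max 1 (j - k) := by
  simp [nball, Nat.card_Icc]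

lemma sum_one_nball (j k : ℕ) : (∑ _i ∈ nball j k, (1:ℝ)) = (nball j k).card := by
  simp

lemma nball_zero (j : ℕ) (hj : 1 ≤ j) : nball j 0 = {j} := by
  unfold nball
  rw [max_eq_right (by omega : (1:ℕ) ≤ j - 0)]
  simp

lemma nball_one (m : ℕ) : nball (m + 2) 1 = {m + 1, m + 2, m + 3} := by
  unfold nball
  ext i
  simp
  omega

lemma sum_nball_one (μ : ℕ → ℝ) (m : ℕ) :
    (∑ i ∈ nball (m + 2) 1, μ i) = μ (m + 1) + μ (m + 2) + μ (m + 3) := by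
  rw [nball_one]
  rw [Finset.sum_insert (by simp), Finset.sum_insert (by simp), Finset.sum_singleton]
  ring

/-- Subset relation: radius-one ratios are ratios (take `k = 0`). -/
lemma ratio0_subset (μ : ℕ → ℝ) : ratio0Set μ ⊆ ratioSet μ := by
  rintro x ⟨j, hj, hx⟩
  refine ⟨j, hj, 0, ?_⟩
  rw [hx, nball_zero j hj, Finset.sum_singleton]

lemma ratio_one_mem : (3:ℝ) ∈ ratioSet (fun _ => (1:ℝ)) := by
  refine ⟨2, by norm_num, 0, ?_⟩
  rw [sum_one_nball, sum_one_nball, nball_card, nball_card]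
  norm_num

lemma ratio0_one_mem : (3:ℝ) ∈ ratio0Set (fun _ => (1:ℝ)) := by
  refine ⟨2, by norm_num, ?_⟩
  rw [sum_one_nball, nball_card]
  norm_num

lemma ratio_one_le (x : ℝ) (hx : x ∈ ratioSet (fun _ => (1:ℝ))) : x ≤ 3 := by
  obtain ⟨j, hj, k, hx⟩ := hx
  rw [sum_one_nball, sum_one_nball, nball_card, nball_card] at hx
  have h1 : 1 ≤ j + k + 1 - max 1 (j - k) := by omega
  have h2 : j + (2*k+1) + 1 - max 1 (j - (2*k+1)) ≤ 3 * (j + k + 1 - max 1 (j - k)) := by omega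
  rw [hx]
  rw [div_le_iff₀ (by exact_mod_cast Nat.lt_of_lt_of_le Nat.zero_lt_one h1)]
  calc ((j + (2*k+1) + 1 - max 1 (j - (2*k+1)) : ℕ) : ℝ)
      ≤ ((3 * (j + k + 1 - max 1 (j - k)) : ℕ) : ℝ) := by exact_mod_cast h2
    _ = 3 * ((j + k + 1 - max 1 (j - k) : ℕ) : ℝ) := by push_cast; ring

lemma ratio0_one_le (x : ℝ) (hx : x ∈ ratio0Set (fun _ => (1:ℝ))) : x ≤ 3 :=
  ratio_one_le x (ratio0_subset _ hx)

lemma bddAbove_ratio_one : BddAbove (ratioSet (fun _ => (1:ℝ))) :=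
  ⟨3, fun x hx => ratio_one_le x hx⟩

lemma sSup_ratio_one : sSup (ratioSet fun _ => (1 : ℝ)) = 3 :=
  le_antisymm (csSup_le ⟨3, ratio_one_mem⟩ fun x hx => ratio_one_le x hx)
    (le_csSup bddAbove_ratio_one ratio_one_mem)

lemma sSup_ratio0_one : sSup (ratio0Set fun _ => (1 : ℝ)) = 3 :=
  le_antisymm (csSup_le ⟨3, ratio0_one_mem⟩ fun x hx => ratio0_one_le x hx)
    (le_csSup ((bddAbove_ratio_one).mono (ratio0_subset _)) ratio0_one_mem)

lemma ratio0_nonempty (μ : ℕ → ℝ) : (ratio0Set μ).Nonempty :=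
  ⟨_, ⟨1, le_refl 1, rfl⟩⟩

/-- Key lower bound: for any positive weight, the radius-one doubling sup is at least 3. -/
lemma three_le_sSup_ratio0 (μ : ℕ → ℝ) (hμ : ∀ j, 1 ≤ j → 0 < μ j)
    (hb : BddAbove (ratio0Set μ)) : 3 ≤ sSup (ratio0Set μ) := by
  by_contra h
  push_neg at h
  set S := sSup (ratio0Set μ) with hS
  have hub : ∀ x ∈ ratio0Set μ, x ≤ S := fun x hx => le_csSup hb hx
  have hpos : ∀ m : ℕ, 0 < μ (m + 1) := fun m => hμ (m + 1) (by omega)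
  -- key inequality
  have hkey : ∀ m : ℕ, μ (m + 1) + μ (m + 2) + μ (m + 3) ≤ S * μ (m + 2) := by
    intro m
    have hmem : (∑ i ∈ nball (m + 2) 1, μ i) / μ (m + 2) ∈ ratio0Set μ :=
      ⟨m + 2, by omega, rfl⟩
    have := hub _ hmem
    rw [sum_nball_one, div_le_iff₀ (hpos (m + 1))] at this
    linarith
  -- ratio sequence
  set r : ℕ → ℝ := fun m => μ (m + 2) / μ (m + 1) with hr
  have hrpos : ∀ m, 0 < r m := fun m => div_pos (hpos (m + 1)) (hpos m)
  have hstep : ∀ m, r (m + 1) ≤ r m - (3 - S) := by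
    intro m
    have p1 := hpos m
    have p2 := hpos (m + 1)
    have key2 : μ (m + 3) * μ (m + 1) ≤ (μ (m + 2) - (3 - S) * μ (m + 1)) * μ (m + 2) := by
      nlinarith [hkey m, sq_nonneg (μ (m + 2) - μ (m + 1)), p1, p2]
    have h1 : μ (m + 3) / μ (m + 2) ≤ (μ (m + 2) - (3 - S) * μ (m + 1)) / μ (m + 1) :=
      (div_le_div_iff₀ p2 p1).mpr key2
    have h2 : (μ (m + 2) - (3 - S) * μ (m + 1)) / μ (m + 1)
        = μ (m + 2) / μ (m + 1) - (3 - S) := by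
      field_simp
    rw [h2] at h1
    exact h1
  have hdesc : ∀ n : ℕ, r n ≤ r 0 - n * (3 - S) := by
    intro n
    induction n with
    | zero => simp
    | succ n ih =>
      have := hstep n
      push_cast
      linarith
  obtain ⟨n, hn⟩ := exists_nat_gt (r 0 / (3 - S))
  have hε : (0:ℝ) < 3 - S := by linarith
  have : r 0 < n * (3 - S) := by
    rw [div_lt_iff₀ hε] at hn
    linarith
  have := hdesc n
  have := hrpos n
  linarith

lemma three_le_sSup_ratio (μ : ℕ → ℝ) (hμ : ∀ j, 1 ≤ j → 0 < μ j)
    (hb : BddAbove (ratioSet μ)) : 3 ≤ sSup (ratioSet μ) := by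
  have hb0 := hb.mono (ratio0_subset μ)
  calc (3:ℝ) ≤ sSup (ratio0Set μ) := three_le_sSup_ratio0 μ hμ hb0
    _ ≤ sSup (ratioSet μ) := csSup_le_csSup hb (ratio0_nonempty μ) (ratio0_subset μ)

/-- The counting measure on `ℕ = {1,2,…}` has doubling constant `3`, and
`C_ℕ = C⁰_ℕ = 3`. -/
theorem stmt_10 :
    sSup (ratioSet fun _ => (1 : ℝ)) = 3 ∧
    sInf {c | ∃ μ : ℕ → ℝ, (∀ j, 1 ≤ j → 0 < μ j) ∧ BddAbove (ratioSet μ) ∧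
      c = sSup (ratioSet μ)} = 3 ∧
    sInf {c | ∃ μ : ℕ → ℝ, (∀ j, 1 ≤ j → 0 < μ j) ∧ BddAbove (ratioSet μ) ∧
      c = sSup (ratio0Set μ)} = 3 := by
  refine ⟨sSup_ratio_one, ?_, ?_⟩
  · have hmem : (3:ℝ) ∈ {c | ∃ μ : ℕ → ℝ, (∀ j, 1 ≤ j → 0 < μ j) ∧ BddAbove (ratioSet μ) ∧
        c = sSup (ratioSet μ)} :=
      ⟨fun _ => 1, fun j _ => one_pos, bddAbove_ratio_one, sSup_ratio_one.symm⟩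
    have hlb : ∀ c ∈ {c | ∃ μ : ℕ → ℝ, (∀ j, 1 ≤ j → 0 < μ j) ∧ BddAbove (ratioSet μ) ∧
        c = sSup (ratioSet μ)}, (3:ℝ) ≤ c := by
      rintro c ⟨μ, hμ, hb, rfl⟩
      exact three_le_sSup_ratio μ hμ hb
    exact le_antisymm (csInf_le ⟨3, hlb⟩ hmem) (le_csInf ⟨3, hmem⟩ hlb)
  · have hmem : (3:ℝ) ∈ {c | ∃ μ : ℕ → ℝ, (∀ j, 1 ≤ j → 0 < μ j) ∧ BddAbove (ratioSet μ) ∧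
        c = sSup (ratio0Set μ)} :=
      ⟨fun _ => 1, fun j _ => one_pos, bddAbove_ratio_one, sSup_ratio0_one.symm⟩
    have hlb : ∀ c ∈ {c | ∃ μ : ℕ → ℝ, (∀ j, 1 ≤ j → 0 < μ j) ∧ BddAbove (ratioSet μ) ∧
        c = sSup (ratio0Set μ)}, (3:ℝ) ≤ c := by
      rintro c ⟨μ, hμ, hb, rfl⟩
      exact three_le_sSup_ratio0 μ hμ (hb.mono (ratio0_subset μ))
    exact le_antisymm (csInf_le ⟨3, hlb⟩ hmem) (le_csInf ⟨3, hmem⟩ hlb)
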